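/- arXiv:2506.00408 — 5 statements merged into one kernel-verified Lean document; each statement's English description precedes it below -/
import Mathlib

section
/- Let A, B, C be real numbers with A > 0, C > 0 and B > 2√(AC), and let r₁ = (B − √(B² − 4AC))/(2A) and r₂ = (B + √(B² − 4AC))/(2A) be the two (positive) roots of −A r² + B r − C = 0. Then ∫_{r₁}^{r₂} √(−A + B/r − C/r²) dr = π (B/(2√A) − √C). -/
open Real intervalIntegral

section Aux
open Set

noncomputable def Fant (a b r : ℝ) : ℝ :=
  Real.sqrt ((b - r) * (r - a)) + (a + b) / 2 * Real.arcsin ((2 * r - a - b) / (b - a))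
    + Real.sqrt (a * b) * Real.arcsin ((2 * (a * b) - (a + b) * r) / (r * (b - a)))

lemma Fant_deriv (a b : ℝ) (ha : 0 < a) (hab : a < b) (r : ℝ) (hr : r ∈ Ioo a b) :
    HasDerivAt (Fant a b) (Real.sqrt ((b - r) * (r - a)) / r) r := by
  obtain ⟨hr1, hr2⟩ := hr
  have hr0 : 0 < r := ha.trans hr1
  have hba : (0:ℝ) < b - a := by linarith
  have hb : (0:ℝ) < b := ha.trans hab
  have hs_pos : 0 < (b - r) * (r - a) := by nlinarith
  set s := Real.sqrt ((b - r) * (r - a)) with hs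
  have hs0 : 0 < s := Real.sqrt_pos.2 hs_pos
  have hs_sq : s ^ 2 = (b - r) * (r - a) := Real.sq_sqrt hs_pos.le
  have hrba : (0:ℝ) < r * (b - a) := mul_pos hr0 hba
  have hab0 : (0:ℝ) < a * b := mul_pos ha hb
  have hsab : 0 < Real.sqrt (a * b) := Real.sqrt_pos.2 hab0
  have hab_sq : (Real.sqrt (a * b)) ^ 2 = a * b := Real.sq_sqrt hab0.le
  -- term 1
  have h1 : HasDerivAt (fun r => Real.sqrt ((b - r) * (r - a)))
      (((a + b) - 2 * r) / (2 * s)) r := by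
    have hp : HasDerivAt (fun r => (b - r) * (r - a)) ((a + b) - 2 * r) r := by
      have := ((hasDerivAt_id r).const_sub b).mul ((hasDerivAt_id r).sub_const a)
      refine this.congr_deriv ?_
      simp only [id_eq]; ring
    exact hp.sqrt hs_pos.ne'
  -- term 2
  have hu1 : ((2 * r - a - b) / (b - a)) ^ 2 < 1 := by
    rw [div_pow, div_lt_one (pow_pos hba 2)]
    nlinarith
  have hu1a : (2 * r - a - b) / (b - a) ≠ -1 := by
    intro h; rw [h] at hu1; norm_num at hu1
  have hu1b : (2 * r - a - b) / (b - a) ≠ 1 := by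
    intro h; rw [h] at hu1; norm_num at hu1
  have hq1 : Real.sqrt (1 - ((2 * r - a - b) / (b - a)) ^ 2) = 2 * s / (b - a) := by
    have h1' : 1 - ((2 * r - a - b) / (b - a)) ^ 2 = (2 * s / (b - a)) ^ 2 := by
      rw [div_pow, div_pow, mul_pow, hs_sq]
      rw [eq_div_iff (by positivity)]
      field_simp
      ring
    rw [h1', Real.sqrt_sq (div_nonneg (by positivity) hba.le)]
  have h2 : HasDerivAt (fun r => Real.arcsin ((2 * r - a - b) / (b - a)))
      (1 / s) r := by
    have hin : HasDerivAt (fun r : ℝ => (2 * r - a - b) / (b - a)) (2 / (b - a)) r := by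
      have h0 : HasDerivAt (fun r : ℝ => 2 * r - a - b) 2 r := by
        simpa using (((hasDerivAt_id r).const_mul 2).sub_const a).sub_const b
      exact h0.div_const (b - a)
    have := (Real.hasDerivAt_arcsin hu1a hu1b).comp r hin
    refine this.congr_deriv ?_
    rw [hq1]
    field_simp
  -- term 3
  have hu2_sq : ((2 * (a * b) - (a + b) * r) / (r * (b - a))) ^ 2 < 1 := by
    rw [div_pow, div_lt_one (pow_pos hrba 2)]
    nlinarith [mul_pos hab0 hs_pos]
  have hu2a : (2 * (a * b) - (a + b) * r) / (r * (b - a)) ≠ -1 := by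
    intro h; rw [h] at hu2_sq; norm_num at hu2_sq
  have hu2b : (2 * (a * b) - (a + b) * r) / (r * (b - a)) ≠ 1 := by
    intro h; rw [h] at hu2_sq; norm_num at hu2_sq
  have hq2 : Real.sqrt (1 - ((2 * (a * b) - (a + b) * r) / (r * (b - a))) ^ 2)
      = 2 * Real.sqrt (a * b) * s / (r * (b - a)) := by
    have e1 : (2 * Real.sqrt (a * b) * s) ^ 2 = 4 * (a * b) * ((b - r) * (r - a)) := by
      rw [mul_pow, mul_pow, hab_sq, hs_sq]; ring
    have key : 1 - ((2 * (a * b) - (a + b) * r) / (r * (b - a))) ^ 2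
        = 4 * (a * b) * ((b - r) * (r - a)) / (r * (b - a)) ^ 2 := by
      rw [div_pow, eq_div_iff (pow_ne_zero 2 hrba.ne')]
      field_simp
      ring
    have h2' : 1 - ((2 * (a * b) - (a + b) * r) / (r * (b - a))) ^ 2
        = (2 * Real.sqrt (a * b) * s / (r * (b - a))) ^ 2 := by
      rw [key, div_pow, e1]
    rw [h2', Real.sqrt_sq (div_nonneg (by positivity) hrba.le)]
  have h3 : HasDerivAt (fun r => Real.arcsin ((2 * (a * b) - (a + b) * r) / (r * (b - a))))
      (-(Real.sqrt (a * b)) / (r * s)) r := by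
    have hin : HasDerivAt (fun r : ℝ => (2 * (a * b) - (a + b) * r) / (r * (b - a)))
        (-(2 * (a * b)) / (r ^ 2 * (b - a))) r := by
      have hnum : HasDerivAt (fun r : ℝ => 2 * (a * b) - (a + b) * r) (-(a + b)) r := by
        simpa using (((hasDerivAt_id r).const_mul (a + b)).const_sub (2 * (a * b)))
      have hden : HasDerivAt (fun r : ℝ => r * (b - a)) (b - a) r := by
        simpa using (hasDerivAt_id r).mul_const (b - a)
      have := hnum.div hden hrba.ne'
      refine this.congr_deriv ?_
      field_simp
      ring
    have := (Real.hasDerivAt_arcsin hu2a hu2b).comp r hin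
    refine this.congr_deriv ?_
    rw [eq_comm, hq2, one_div, inv_div, div_mul_div_comm,
      div_eq_div_iff (mul_pos hr0 hs0).ne'
        (mul_pos (by positivity : (0:ℝ) < 2 * Real.sqrt (a * b) * s)
          (mul_pos (pow_pos hr0 2) hba)).ne']
    linear_combination (-2 * s * r ^ 2 * (b - a)) * hab_sq
  -- combine
  have hsum := (h1.add (h2.const_mul ((a + b) / 2))).add (h3.const_mul (Real.sqrt (a * b)))
  have heq : ((a + b) - 2 * r) / (2 * s) + (a + b) / 2 * (1 / s)
      + Real.sqrt (a * b) * (-(Real.sqrt (a * b)) / (r * s)) = s / r := by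
    have h5 : Real.sqrt (a * b) * (-(Real.sqrt (a * b)) / (r * s)) = -(a * b) / (r * s) := by
      rw [mul_div_assoc', mul_neg, ← pow_two, hab_sq]
    rw [h5]
    field_simp
    linear_combination (-2) * hs_sq
  have : HasDerivAt (Fant a b) (((a + b) - 2 * r) / (2 * s) + (a + b) / 2 * (1 / s)
      + Real.sqrt (a * b) * (-(Real.sqrt (a * b)) / (r * s))) r := by
    unfold Fant; exact hsum
  rw [heq] at this
  exact this

lemma key_integral (a b : ℝ) (ha : 0 < a) (hab : a < b) :
    ∫ r in a..b, Real.sqrt ((b - r) * (r - a)) / r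
      = Real.pi * ((a + b) / 2 - Real.sqrt (a * b)) := by
  have hba : (0:ℝ) < b - a := by linarith
  have hcont : ContinuousOn (fun r => Real.sqrt ((b - r) * (r - a)) / r) (Icc a b) := by
    apply ContinuousOn.div
    · exact (Continuous.continuousOn (by continuity)).sqrt
    · exact continuousOn_id
    · intro x hx; exact ne_of_gt (lt_of_lt_of_le ha hx.1)
  have hFcont : ContinuousOn (Fant a b) (Icc a b) := by
    unfold Fant
    apply ContinuousOn.add
    apply ContinuousOn.add
    · exact (Continuous.continuousOn (by continuity)).sqrt
    · exact Continuous.continuousOn (by continuity)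
    · apply ContinuousOn.mul continuousOn_const
      apply Real.continuous_arcsin.comp_continuousOn
      apply ContinuousOn.div (Continuous.continuousOn (by continuity))
        (Continuous.continuousOn (by continuity))
      intro x hx
      exact ne_of_gt (mul_pos (lt_of_lt_of_le ha hx.1) hba)
  have hint : IntervalIntegrable (fun r => Real.sqrt ((b - r) * (r - a)) / r)
      MeasureTheory.volume a b := hcont.intervalIntegrable_of_Icc hab.le
  have hFTC := intervalIntegral.integral_eq_sub_of_hasDeriv_right_of_le hab.le hFcont
    (fun x hx => (Fant_deriv a b ha hab x hx).hasDerivWithinAt) hint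
  rw [hFTC]
  unfold Fant
  have e1 : ((b:ℝ) - b) * (b - a) = 0 := by ring
  have e2 : ((b:ℝ) - a) * (a - a) = 0 := by ring
  have v1 : (2 * b - a - b) / (b - a) = 1 := by
    rw [div_eq_iff hba.ne']; ring
  have v2 : (2 * a - a - b) / (b - a) = -1 := by
    rw [div_eq_iff hba.ne']; ring
  have v3 : (2 * (a * b) - (a + b) * b) / (b * (b - a)) = -1 := by
    rw [div_eq_iff (mul_pos (ha.trans hab) hba).ne']; ring
  have v4 : (2 * (a * b) - (a + b) * a) / (a * (b - a)) = 1 := by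
    rw [div_eq_iff (mul_pos ha hba).ne']; ring
  rw [e1, e2, v1, v2, v3, v4, Real.arcsin_one, Real.arcsin_neg_one]
  rw [Real.sqrt_zero]
  ring


end Aux

/-- The Sommerfeld-type integral:
for `A, C > 0` and `B > 2√(AC)`, with `r₁ ≤ r₂` the roots of `-A r² + B r - C = 0`,
`∫_{r₁}^{r₂} √(-A + B/r - C/r²) dr = π (B/(2√A) - √C)`. -/
theorem sommerfeld_integral (A B C : ℝ) (hA : 0 < A) (hC : 0 < C)
    (hB : 2 * Real.sqrt (A * C) < B)
    (r₁ r₂ : ℝ)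
    (hr₁ : r₁ = (B - Real.sqrt (B ^ 2 - 4 * A * C)) / (2 * A))
    (hr₂ : r₂ = (B + Real.sqrt (B ^ 2 - 4 * A * C)) / (2 * A)) :
    ∫ r in r₁..r₂, Real.sqrt (-A + B / r - C / r ^ 2)
      = Real.pi * (B / (2 * Real.sqrt A) - Real.sqrt C) := by
  have hAC : 0 < A * C := mul_pos hA hC
  have hB0 : 0 < B := lt_of_le_of_lt (by positivity) hB
  have hdisc : 0 < B ^ 2 - 4 * A * C := by
    have h := Real.sq_sqrt hAC.le
    nlinarith [Real.sqrt_nonneg (A * C)]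
  set D := Real.sqrt (B ^ 2 - 4 * A * C) with hD
  have hD0 : 0 < D := Real.sqrt_pos.2 hdisc
  have hD_sq : D ^ 2 = B ^ 2 - 4 * A * C := Real.sq_sqrt hdisc.le
  have hDB : D < B := by
    nlinarith [hD_sq, hD0]
  have hr1pos : 0 < r₁ := by
    rw [hr₁]; apply div_pos (by linarith) (by linarith)
  have hr12 : r₁ < r₂ := by
    rw [hr₁, hr₂]
    have h2A : (0:ℝ) < 2 * A := by linarith
    exact div_lt_div_of_pos_right (by linarith) h2A
  have hsum : A * (r₁ + r₂) = B := by
    rw [hr₁, hr₂]; field_simp; ring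
  have hprod : A * (r₁ * r₂) = C := by
    rw [hr₁, hr₂]
    field_simp
    nlinarith [hD_sq]
  have hr2pos : 0 < r₂ := hr1pos.trans hr12
  -- integrand equality on Icc
  have hEq : Set.EqOn (fun r => Real.sqrt (-A + B / r - C / r ^ 2))
      (fun r => Real.sqrt A * (Real.sqrt ((r₂ - r) * (r - r₁)) / r)) (Set.uIcc r₁ r₂) := by
    intro r hr
    rw [Set.uIcc_of_le hr12.le] at hr
    dsimp only
    have hr0 : 0 < r := lt_of_lt_of_le hr1pos hr.1
    have hpr : 0 ≤ (r₂ - r) * (r - r₁) := mul_nonneg (by linarith [hr.2]) (by linarith [hr.1])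
    have hrad : -A + B / r - C / r ^ 2 = A * ((r₂ - r) * (r - r₁)) / r ^ 2 := by
      field_simp
      linear_combination (-r) * hsum + hprod
    rw [hrad]
    rw [show A * ((r₂ - r) * (r - r₁)) / r ^ 2
        = (Real.sqrt A * Real.sqrt ((r₂ - r) * (r - r₁)) / r) ^ 2 by
      rw [div_pow, mul_pow, Real.sq_sqrt hA.le, Real.sq_sqrt hpr]]
    rw [Real.sqrt_sq (by positivity)]
    ring
  rw [intervalIntegral.integral_congr hEq]
  rw [intervalIntegral.integral_const_mul, key_integral r₁ r₂ hr1pos hr12]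
  have hsA : Real.sqrt A > 0 := Real.sqrt_pos.2 hA
  have hsA_sq : Real.sqrt A ^ 2 = A := Real.sq_sqrt hA.le
  have h1 : Real.sqrt A * ((r₁ + r₂) / 2) = B / (2 * Real.sqrt A) := by
    rw [eq_div_iff (by positivity)]
    nlinarith [hsum, hsA_sq]
  have h2 : Real.sqrt A * Real.sqrt (r₁ * r₂) = Real.sqrt C := by
    rw [← Real.sqrt_mul hA.le, show A * (r₁ * r₂) = C from hprod]
  rw [← mul_assoc, mul_comm (Real.sqrt A) Real.pi, mul_assoc, mul_sub, h1, h2]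
end

section
/- For every real number ε with 0 ≤ ε < 1, (1/(2π)) ∫₀^{2π} ε² sin²φ / (1 + ε cos φ)² dφ = (1 − ε²)^{−1/2} − 1. -/
open Real intervalIntegral

set_option maxHeartbeats 800000 in
/-- Sommerfeld's radial quantum integral: for eccentricity `0 ≤ ε < 1`,
`(1/(2π)) ∫₀^{2π} ε² sin²φ / (1 + ε cos φ)² dφ = (1 - ε²)^{-1/2} - 1`. -/
theorem sommerfeld_radial_integral (ε : ℝ) (hε0 : 0 ≤ ε) (hε1 : ε < 1) :
    (1 / (2 * Real.pi)) *
        ∫ φ in (0:ℝ)..(2 * Real.pi),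
          ε ^ 2 * Real.sin φ ^ 2 / (1 + ε * Real.cos φ) ^ 2
      = (1 - ε ^ 2) ^ (-(1:ℝ) / 2) - 1 := by
  set s : ℝ := Real.sqrt (1 - ε ^ 2) with hsdef
  have h1e : (0:ℝ) < 1 - ε ^ 2 := by nlinarith
  have hs0 : 0 < s := Real.sqrt_pos.2 h1e
  have hs2 : s ^ 2 = 1 - ε ^ 2 := Real.sq_sqrt h1e.le
  have hu : ∀ φ : ℝ, 0 < 1 + ε * Real.cos φ := by
    intro φ
    nlinarith [mul_le_mul_of_nonneg_left (Real.neg_one_le_cos φ) hε0]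
  have hus : ∀ φ : ℝ, 0 < 1 + ε * Real.cos φ + s := fun φ => by linarith [hu φ]
  have key : ∀ φ : ℝ, HasDerivAt
      (fun x => -x + (1/s) * (x - 2 * Real.arctan (ε * Real.sin x / (1 + ε * Real.cos x + s)))
        + ε * Real.sin x / (1 + ε * Real.cos x))
      (ε ^ 2 * Real.sin φ ^ 2 / (1 + ε * Real.cos φ) ^ 2) φ := by
    intro φ
    have hS : Real.sin φ ^ 2 = 1 - Real.cos φ ^ 2 := by
      have := Real.sin_sq_add_cos_sq φ; linarith
    have h1 : (1 + ε * Real.cos φ) ≠ 0 := (hu φ).ne'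
    have h2 : (1 + ε * Real.cos φ + s) ≠ 0 := (hus φ).ne'
    have hnum : HasDerivAt (fun x => ε * Real.sin x) (ε * Real.cos φ) φ :=
      (Real.hasDerivAt_sin φ).const_mul ε
    have hden : HasDerivAt (fun x => 1 + ε * Real.cos x + s) (ε * -Real.sin φ) φ :=
      (((Real.hasDerivAt_cos φ).const_mul ε).const_add 1).add_const s
    have hg : HasDerivAt (fun x => ε * Real.sin x / (1 + ε * Real.cos x + s))
        ((ε * Real.cos φ * (1 + ε * Real.cos φ + s) - ε * Real.sin φ * (ε * -Real.sin φ))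
          / (1 + ε * Real.cos φ + s) ^ 2) φ :=
      hnum.div hden h2
    have harctan : HasDerivAt (fun x => Real.arctan (ε * Real.sin x / (1 + ε * Real.cos x + s)))
        ((1 / (1 + (ε * Real.sin φ / (1 + ε * Real.cos φ + s)) ^ 2)) *
          ((ε * Real.cos φ * (1 + ε * Real.cos φ + s) - ε * Real.sin φ * (ε * -Real.sin φ))
            / (1 + ε * Real.cos φ + s) ^ 2)) φ := by
      exact (Real.hasDerivAt_arctan _).comp φ hg
    have hden2 : HasDerivAt (fun x => 1 + ε * Real.cos x) (ε * -Real.sin φ) φ :=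
      ((Real.hasDerivAt_cos φ).const_mul ε).const_add 1
    have hlast : HasDerivAt (fun x => ε * Real.sin x / (1 + ε * Real.cos x))
        ((ε * Real.cos φ * (1 + ε * Real.cos φ) - ε * Real.sin φ * (ε * -Real.sin φ))
          / (1 + ε * Real.cos φ) ^ 2) φ :=
      hnum.div hden2 h1
    have hmid : HasDerivAt (fun x => (1/s) * (x - 2 * Real.arctan (ε * Real.sin x / (1 + ε * Real.cos x + s))))
        ((1/s) * (1 - 2 * ((1 / (1 + (ε * Real.sin φ / (1 + ε * Real.cos φ + s)) ^ 2)) *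
          ((ε * Real.cos φ * (1 + ε * Real.cos φ + s) - ε * Real.sin φ * (ε * -Real.sin φ))
            / (1 + ε * Real.cos φ + s) ^ 2)))) φ :=
      ((hasDerivAt_id φ).sub (harctan.const_mul 2)).const_mul (1/s)
    have this1 := (((hasDerivAt_id φ).neg.add hmid).add hlast)
    refine HasDerivAt.congr_deriv this1 ?_
    -- simplify the arctan derivative factor
    have h1g : 1 + (ε * Real.sin φ / (1 + ε * Real.cos φ + s)) ^ 2
        = 2 * (1 + ε * Real.cos φ) * (s + 1) / (1 + ε * Real.cos φ + s) ^ 2 := by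
      field_simp
      linear_combination ε ^ 2 * hS + hs2
    have harc : (1 / (1 + (ε * Real.sin φ / (1 + ε * Real.cos φ + s)) ^ 2)) *
          ((ε * Real.cos φ * (1 + ε * Real.cos φ + s) - ε * Real.sin φ * (ε * -Real.sin φ))
            / (1 + ε * Real.cos φ + s) ^ 2)
        = ((1 + ε * Real.cos φ) - s) / (2 * (1 + ε * Real.cos φ)) := by
      rw [h1g]
      have h3 : s + 1 ≠ 0 := by positivity
      field_simp
      linear_combination ε ^ 2 * hS + hs2
    rw [harc]
    have hs0' : s ≠ 0 := hs0.ne'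
    field_simp
    ring
  have hcont : Continuous fun φ => ε ^ 2 * Real.sin φ ^ 2 / (1 + ε * Real.cos φ) ^ 2 := by
    apply Continuous.div (by continuity) (by continuity)
    exact fun φ => pow_ne_zero 2 (hu φ).ne'
  have hint := intervalIntegral.integral_eq_sub_of_hasDerivAt
    (f := fun x => -x + (1/s) * (x - 2 * Real.arctan (ε * Real.sin x / (1 + ε * Real.cos x + s)))
      + ε * Real.sin x / (1 + ε * Real.cos x))
    (fun φ _ => key φ) (hcont.intervalIntegrable 0 (2 * Real.pi))
  rw [hint]
  have hrpow : (1 - ε ^ 2) ^ (-(1:ℝ) / 2) = 1 / s := by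
    rw [hsdef, Real.sqrt_eq_rpow, show (-(1:ℝ)/2) = -(1/2:ℝ) by norm_num,
      Real.rpow_neg h1e.le, one_div]
    norm_num
  rw [hrpow]
  have hpi : Real.pi ≠ 0 := Real.pi_ne_zero
  simp [Real.sin_two_pi, Real.cos_two_pi]
  field_simp
  ring
end

section
/- Fix real numbers A > 0 and C > 0, and for each B > 2√(AC) define I(B) = ∫_{r₁(B)}^{r₂(B)} √(−A + B/r − C/r²) dr, where r₁(B) = (B − √(B² − 4AC))/(2A) and r₂(B) = (B + √(B² − 4AC))/(2A). Then for every B > 2√(AC), the function I has derivative π/(2√A) at B, i.e. I'(B) = π/(2√A). -/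
open Real intervalIntegral Set
set_option maxHeartbeats 1000000

private lemma somm_alg1 (A B C r s q a c : ℝ) (hs0 : s ≠ 0)
    (ha2 : a ^ 2 = A) (hc2 : c ^ 2 = C)
    (hq2 : q ^ 2 = -A * r ^ 2 + B * r - C) (hs2 : s ^ 2 = B ^ 2 - 4 * A * C) :
    1 - ((2 * A * r - B) / s) ^ 2 = (2 * a * q / s) ^ 2 := by
  subst ha2; subst hc2
  field_simp
  linear_combination hs2 - 4 * a ^ 2 * hq2

private lemma somm_alg2 (A B C r s q a c : ℝ) (hr0 : r ≠ 0) (hs0 : s ≠ 0)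
    (ha2 : a ^ 2 = A) (hc2 : c ^ 2 = C)
    (hq2 : q ^ 2 = -A * r ^ 2 + B * r - C) (hs2 : s ^ 2 = B ^ 2 - 4 * A * C) :
    1 - ((B * r - 2 * C) / (r * s)) ^ 2 = (2 * c * q / (r * s)) ^ 2 := by
  subst ha2; subst hc2
  field_simp
  linear_combination r ^ 2 * hs2 - 4 * c ^ 2 * hq2

private lemma somm_alg3 (A B C r s q a c : ℝ) (hr0 : 0 < r) (hs0 : 0 < s) (hq0 : 0 < q)
    (ha0 : 0 < a) (hc0 : 0 < c) (ha2 : a ^ 2 = A) (hc2 : c ^ 2 = C)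
    (hq2 : q ^ 2 = -A * r ^ 2 + B * r - C) :
    q / r = (-A * (2 * r) + B) / (2 * q)
      + B / (2 * a) * (1 / (2 * a * q / s) * (2 * A / s))
      - c * (1 / (2 * c * q / (r * s)) * ((B * (r * s) - (B * r - 2 * C) * s) / (r * s) ^ 2)) := by
  subst ha2; subst hc2
  field_simp
  ring_nf
  linear_combination 2 * hq2

lemma sommerfeld_eval (A C : ℝ) (hA : 0 < A) (hC : 0 < C) (B : ℝ)
    (hB : 2 * Real.sqrt (A * C) < B) :
    (∫ r in ((B - Real.sqrt (B ^ 2 - 4 * A * C)) / (2 * A))..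
            ((B + Real.sqrt (B ^ 2 - 4 * A * C)) / (2 * A)),
       Real.sqrt (-A + B / r - C / r ^ 2))
      = Real.pi * B / (2 * Real.sqrt A) - Real.pi * Real.sqrt C := by
  have hACs : Real.sqrt (A * C) ^ 2 = A * C := Real.sq_sqrt (by positivity)
  have hB0 : 0 < B := lt_of_le_of_lt (by positivity) hB
  have hD : 0 < B ^ 2 - 4 * A * C := by nlinarith [Real.sqrt_nonneg (A * C)]
  set s := Real.sqrt (B ^ 2 - 4 * A * C) with hs_def
  have hs2 : s ^ 2 = B ^ 2 - 4 * A * C := Real.sq_sqrt hD.le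
  have hs0 : 0 < s := Real.sqrt_pos.mpr hD
  have hsB : s < B := by nlinarith
  set r₁ := (B - s) / (2 * A) with hr1_def
  set r₂ := (B + s) / (2 * A) with hr2_def
  have hr1 : 0 < r₁ := div_pos (by linarith) (by positivity)
  have h2A : (0:ℝ) < 2 * A := by positivity
  have hr12 : r₁ < r₂ := by
    rw [hr1_def, hr2_def, div_lt_div_iff₀ h2A h2A]; nlinarith
  have hr2pos : 0 < r₂ := hr1.trans hr12
  have hQfact : ∀ r : ℝ, -A * r ^ 2 + B * r - C = A * (r - r₁) * (r₂ - r) := by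
    intro r
    rw [hr1_def, hr2_def]
    field_simp
    nlinarith [hs2]
  have hQpos : ∀ r ∈ Ioo r₁ r₂, 0 < -A * r ^ 2 + B * r - C := by
    intro r hr
    rw [hQfact]
    exact mul_pos (mul_pos hA (sub_pos.2 hr.1)) (sub_pos.2 hr.2)
  have hQnonneg : ∀ r ∈ Icc r₁ r₂, 0 ≤ -A * r ^ 2 + B * r - C := by
    intro r hr
    rw [hQfact]
    exact mul_nonneg (mul_nonneg hA.le (sub_nonneg.2 hr.1)) (sub_nonneg.2 hr.2)
  clear_value s r₁ r₂
  set F : ℝ → ℝ := fun r =>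
    Real.sqrt (-A * r ^ 2 + B * r - C)
      + B / (2 * Real.sqrt A) * Real.arcsin ((2 * A * r - B) / s)
      - Real.sqrt C * Real.arcsin ((B * r - 2 * C) / (r * s)) with hF_def
  have hFcont : ContinuousOn F (Icc r₁ r₂) := by
    rw [hF_def]
    apply ContinuousOn.sub
    apply ContinuousOn.add
    · exact (Real.continuous_sqrt.comp (by fun_prop)).continuousOn
    · apply ContinuousOn.mul continuousOn_const
      apply Real.continuous_arcsin.comp_continuousOn
      exact Continuous.continuousOn (by fun_prop)
    · apply ContinuousOn.mul continuousOn_const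
      apply Real.continuous_arcsin.comp_continuousOn
      apply ContinuousOn.div (by fun_prop) (by fun_prop)
      intro x hx
      have hx0 : 0 < x := lt_of_lt_of_le hr1 hx.1
      positivity
  have hderiv : ∀ r ∈ Ioo r₁ r₂,
      HasDerivAt F (Real.sqrt (-A * r ^ 2 + B * r - C) / r) r := by
    intro r hr
    have hr0 : 0 < r := lt_trans hr1 hr.1
    have hQr : 0 < -A * r ^ 2 + B * r - C := hQpos r hr
    set a := Real.sqrt A with ha_def
    have ha2 : a ^ 2 = A := Real.sq_sqrt hA.le
    have ha0 : 0 < a := Real.sqrt_pos.mpr hA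
    set c := Real.sqrt C with hc_def
    have hc2 : c ^ 2 = C := Real.sq_sqrt hC.le
    have hc0 : 0 < c := Real.sqrt_pos.mpr hC
    set q := Real.sqrt (-A * r ^ 2 + B * r - C) with hq_def
    have hq2 : q ^ 2 = -a ^ 2 * r ^ 2 + B * r - c ^ 2 := by
      rw [ha2, hc2]; exact Real.sq_sqrt hQr.le
    have hq0 : 0 < q := Real.sqrt_pos.mpr hQr
    have hu2 : ((2 * A * r - B) / s) ^ 2 < 1 := by
      rw [div_pow, div_lt_one (by positivity)]
      nlinarith [hs2, hQr]
    have hu1 : (2 * A * r - B) / s ≠ 1 := fun h => by rw [h] at hu2; norm_num at hu2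
    have hu1' : (2 * A * r - B) / s ≠ -1 := fun h => by rw [h] at hu2; norm_num at hu2
    have hw2 : ((B * r - 2 * C) / (r * s)) ^ 2 < 1 := by
      rw [div_pow, div_lt_one (by positivity)]
      nlinarith [hs2, hQr]
    have hw1 : (B * r - 2 * C) / (r * s) ≠ 1 := fun h => by rw [h] at hw2; norm_num at hw2
    have hw1' : (B * r - 2 * C) / (r * s) ≠ -1 := fun h => by rw [h] at hw2; norm_num at hw2
    have hq2' : q ^ 2 = -A * r ^ 2 + B * r - C := Real.sq_sqrt hQr.le
    have h1 : Real.sqrt (1 - ((2 * A * r - B) / s) ^ 2) = 2 * a * q / s := by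
      rw [somm_alg1 A B C r s q a c hs0.ne' ha2 hc2 hq2' hs2]
      exact Real.sqrt_sq (by positivity)
    have h2 : Real.sqrt (1 - ((B * r - 2 * C) / (r * s)) ^ 2) = 2 * c * q / (r * s) := by
      rw [somm_alg2 A B C r s q a c hr0.ne' hs0.ne' ha2 hc2 hq2' hs2]
      exact Real.sqrt_sq (by positivity)
    have d1 : HasDerivAt (fun x : ℝ => -A * x ^ 2 + B * x - C) (-A * (2 * r) + B) r := by
      have := (((hasDerivAt_pow 2 r).const_mul (-A)).add
        ((hasDerivAt_id r).const_mul B)).sub_const C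
      simpa using this
    have dsq : HasDerivAt (fun x : ℝ => Real.sqrt (-A * x ^ 2 + B * x - C))
        ((-A * (2 * r) + B) / (2 * q)) r := d1.sqrt hQr.ne'
    have d2i : HasDerivAt (fun x : ℝ => (2 * A * x - B) / s) (2 * A / s) r := by
      have := (((hasDerivAt_id r).const_mul (2 * A)).sub_const B).div_const s
      simpa using this
    have d2 : HasDerivAt (fun x : ℝ => Real.arcsin ((2 * A * x - B) / s))
        (1 / Real.sqrt (1 - ((2 * A * r - B) / s) ^ 2) * (2 * A / s)) r :=
      by have := (Real.hasDerivAt_arcsin hu1' hu1).comp r d2i; exact this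
    have d3n : HasDerivAt (fun x : ℝ => B * x - 2 * C) B r := by
      have := ((hasDerivAt_id r).const_mul B).sub_const (2 * C)
      simpa using this
    have d3d : HasDerivAt (fun x : ℝ => x * s) s r := by
      have := (hasDerivAt_id r).mul_const s
      simpa using this
    have d3i : HasDerivAt (fun x : ℝ => (B * x - 2 * C) / (x * s))
        ((B * (r * s) - (B * r - 2 * C) * s) / (r * s) ^ 2) r :=
      d3n.div d3d (by positivity)
    have d3 : HasDerivAt (fun x : ℝ => Real.arcsin ((B * x - 2 * C) / (x * s)))
        (1 / Real.sqrt (1 - ((B * r - 2 * C) / (r * s)) ^ 2)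
          * ((B * (r * s) - (B * r - 2 * C) * s) / (r * s) ^ 2)) r :=
      by have := (Real.hasDerivAt_arcsin hw1' hw1).comp r d3i; exact this
    have dF := (dsq.add (d2.const_mul (B / (2 * a)))).sub (d3.const_mul c)
    rw [hF_def]
    refine dF.congr_deriv ?_
    rw [h1, h2]
    exact (somm_alg3 A B C r s q a c hr0 hs0 hq0 ha0 hc0 ha2 hc2 hq2').symm
  have hint : IntervalIntegrable (fun r => Real.sqrt (-A * r ^ 2 + B * r - C) / r)
      MeasureTheory.volume r₁ r₂ := by
    apply ContinuousOn.intervalIntegrable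
    apply ContinuousOn.div
      ((Real.continuous_sqrt.comp (by fun_prop)).continuousOn) continuousOn_id
    intro x hx
    rw [uIcc_of_le hr12.le] at hx
    exact (lt_of_lt_of_le hr1 hx.1).ne'
  have hFTC := intervalIntegral.integral_eq_sub_of_hasDerivAt_of_le hr12.le hFcont hderiv hint
  have hcongr : Set.EqOn (fun r => Real.sqrt (-A + B / r - C / r ^ 2))
      (fun r => Real.sqrt (-A * r ^ 2 + B * r - C) / r) (Set.uIcc r₁ r₂) := by
    intro x hx
    rw [uIcc_of_le hr12.le] at hx
    have hx0 : 0 < x := lt_of_lt_of_le hr1 hx.1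
    simp only
    rw [show -A + B / x - C / x ^ 2 = (-A * x ^ 2 + B * x - C) / x ^ 2 by field_simp]
    rw [Real.sqrt_div (hQnonneg x hx), Real.sqrt_sq hx0.le]
  rw [intervalIntegral.integral_congr hcongr, hFTC]
  have hQ1 : -A * r₁ ^ 2 + B * r₁ - C = 0 := by rw [hQfact]; ring
  have hQ2 : -A * r₂ ^ 2 + B * r₂ - C = 0 := by rw [hQfact]; ring
  have e2a : (2 * A * r₂ - B) / s = 1 := by
    have h : 2 * A * r₂ - B = s := by rw [hr2_def]; field_simp; ring
    rw [h, div_self hs0.ne']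
  have e1a : (2 * A * r₁ - B) / s = -1 := by
    have h : 2 * A * r₁ - B = -s := by rw [hr1_def]; field_simp; ring
    rw [h, neg_div, div_self hs0.ne']
  have e2b : (B * r₂ - 2 * C) / (r₂ * s) = 1 := by
    have h : B * r₂ - 2 * C = r₂ * s := by
      rw [hr2_def]; field_simp; linear_combination -hs2
    rw [h, div_self (mul_pos hr2pos hs0).ne']
  have e1b : (B * r₁ - 2 * C) / (r₁ * s) = -1 := by
    have h : B * r₁ - 2 * C = -(r₁ * s) := by
      rw [hr1_def]; field_simp; linear_combination -hs2
    rw [h, neg_div, div_self (mul_pos hr1 hs0).ne']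
  rw [hF_def]
  simp only [hQ1, hQ2, e1a, e2a, e1b, e2b, Real.sqrt_zero, Real.arcsin_one,
    Real.arcsin_neg_one]
  ring

/-- Differentiation of the Sommerfeld-type integral with respect to the parameter `B`:
for fixed `A, C > 0`, the function
`I(B) = ∫_{r₁(B)}^{r₂(B)} √(-A + B/r - C/r²) dr` with
`r₁(B) = (B - √(B² - 4AC))/(2A)`, `r₂(B) = (B + √(B² - 4AC))/(2A)`,
has derivative `π/(2√A)` at every `B > 2√(AC)`. -/
theorem sommerfeld_integral_deriv (A C : ℝ) (hA : 0 < A) (hC : 0 < C)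
    (I : ℝ → ℝ)
    (hI : ∀ B : ℝ, I B =
      ∫ r in ((B - Real.sqrt (B ^ 2 - 4 * A * C)) / (2 * A))..
              ((B + Real.sqrt (B ^ 2 - 4 * A * C)) / (2 * A)),
        Real.sqrt (-A + B / r - C / r ^ 2))
    (B : ℝ) (hB : 2 * Real.sqrt (A * C) < B) :
    HasDerivAt I (Real.pi / (2 * Real.sqrt A)) B := by
  have heq : ∀ᶠ b in nhds B,
      I b = Real.pi * b / (2 * Real.sqrt A) - Real.pi * Real.sqrt C := by
    filter_upwards [Ioi_mem_nhds hB] with b hb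
    rw [hI b, sommerfeld_eval A C hA hC b hb]
  have hg : HasDerivAt (fun b => Real.pi * b / (2 * Real.sqrt A) - Real.pi * Real.sqrt C)
      (Real.pi / (2 * Real.sqrt A)) B := by
    have := (((hasDerivAt_id B).const_mul Real.pi).div_const
      (2 * Real.sqrt A)).sub_const (Real.pi * Real.sqrt C)
    simpa using this
  exact hg.congr_of_eventuallyEq heq
end

section
/- Let m, c, ħ, α, Z, a, E, ω, n_θ be positive real numbers, let n_r ≥ 0 be real, let ε ∈ [0,1), and assume n_θ > αZ. Suppose the following hold: (i) α²Z² + (ω² − 1) n_θ² = 0; (ii) E = c ω² ħ n_θ² / (a Z α (1 − ε²)); (iii) E²/(c⁴ m²) + ω² ħ² n_θ² / (a² c² m² (1 − ε²)) = 1; (iv) 1/(1 − ε²) = (1 + n_r/(ω n_θ))². Then E / (m c²) = (1 + α²Z² / (n_r + √(n_θ² − α²Z²))²)^{−1/2}. -/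
open Real

set_option maxHeartbeats 1000000 in
/-- Sommerfeld's fine-structure formula from the conditions of his derivation:
given (i) the vanishing of the quadratic coefficient, (ii)–(iii) the energy/orbit
matching conditions, and (iv) the radial quantization condition, one has
`E/(mc²) = (1 + α²Z²/(n_r + √(n_θ² - α²Z²))²)^{-1/2}`. -/
theorem sommerfeld_fine_structure
    (m c hbar α Z a E ω nθ : ℝ) (n_r : ℝ)
    (hm : 0 < m) (hc : 0 < c) (hbar_pos : 0 < hbar) (hα : 0 < α) (hZ : 0 < Z)
    (ha : 0 < a) (hE : 0 < E) (hω : 0 < ω) (hnθ : 0 < nθ)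
    (hnr : 0 ≤ n_r) (ε : ℝ) (hε0 : 0 ≤ ε) (hε1 : ε < 1)
    (hbound : α * Z < nθ)
    (h1 : α ^ 2 * Z ^ 2 + (ω ^ 2 - 1) * nθ ^ 2 = 0)
    (h2 : E = c * ω ^ 2 * hbar * nθ ^ 2 / (a * Z * α * (1 - ε ^ 2)))
    (h3 : E ^ 2 / (c ^ 4 * m ^ 2)
          + ω ^ 2 * hbar ^ 2 * nθ ^ 2 / (a ^ 2 * c ^ 2 * m ^ 2 * (1 - ε ^ 2)) = 1)
    (h4 : 1 / (1 - ε ^ 2) = (1 + n_r / (ω * nθ)) ^ 2) :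
    E / (m * c ^ 2)
      = (1 + α ^ 2 * Z ^ 2 / (n_r + Real.sqrt (nθ ^ 2 - α ^ 2 * Z ^ 2)) ^ 2)
          ^ (-(1:ℝ) / 2) := by
  have hD : 0 < 1 - ε ^ 2 := by nlinarith
  have hs2 : 0 < nθ ^ 2 - α ^ 2 * Z ^ 2 := by nlinarith [mul_pos hα hZ]
  set s := Real.sqrt (nθ ^ 2 - α ^ 2 * Z ^ 2) with hs_def
  have hs_pos : 0 < s := Real.sqrt_pos.mpr hs2
  have hs_sq : s ^ 2 = nθ ^ 2 - α ^ 2 * Z ^ 2 := Real.sq_sqrt hs2.le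
  have hωnθ : ω * nθ = s := by
    have h := Real.sqrt_sq (mul_pos hω hnθ).le
    rw [show (ω * nθ) ^ 2 = nθ ^ 2 - α ^ 2 * Z ^ 2 by nlinarith] at h
    exact h.symm
  have hns : 0 < n_r + s := by linarith
  have h2' : E * (a * Z * α * (1 - ε ^ 2)) = c * ω ^ 2 * hbar * nθ ^ 2 := by
    field_simp at h2; linear_combination h2
  have h3' : E ^ 2 * (a ^ 2 * (1 - ε ^ 2)) + ω ^ 2 * hbar ^ 2 * nθ ^ 2 * c ^ 2
      = c ^ 4 * m ^ 2 * (a ^ 2 * (1 - ε ^ 2)) := by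
    field_simp at h3
    refine mul_left_cancel₀ (a := c ^ 2 * m ^ 2) (by positivity) ?_
    linear_combination (c ^ 2 * m ^ 2) * h3
  have h4' : (1 - ε ^ 2) * (ω * nθ + n_r) ^ 2 = (ω * nθ) ^ 2 := by
    field_simp at h4; linear_combination -h4
  have hE2 : E ^ 2 * ((ω * nθ) ^ 2 + α ^ 2 * Z ^ 2 * (1 - ε ^ 2))
      = c ^ 4 * m ^ 2 * (ω * nθ) ^ 2 := by
    have hbig : (a ^ 2 * (1 - ε ^ 2)) * (E ^ 2 * ((ω * nθ) ^ 2 + α ^ 2 * Z ^ 2 * (1 - ε ^ 2)))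
        = (a ^ 2 * (1 - ε ^ 2)) * (c ^ 4 * m ^ 2 * (ω * nθ) ^ 2) := by
      linear_combination (ω ^ 2 * nθ ^ 2) * h3'
        + (E * (a * Z * α * (1 - ε ^ 2)) + c * ω ^ 2 * hbar * nθ ^ 2) * h2'
    exact mul_left_cancel₀ (by positivity) hbig
  rw [hωnθ] at hE2 h4'
  have key2 : E ^ 2 * ((n_r + s) ^ 2 + α ^ 2 * Z ^ 2)
      = c ^ 4 * m ^ 2 * (n_r + s) ^ 2 := by
    have hbig : s ^ 2 * (E ^ 2 * ((n_r + s) ^ 2 + α ^ 2 * Z ^ 2))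
        = s ^ 2 * (c ^ 4 * m ^ 2 * (n_r + s) ^ 2) := by
      linear_combination (s + n_r) ^ 2 * hE2 - α ^ 2 * Z ^ 2 * E ^ 2 * h4'
    exact mul_left_cancel₀ (pow_ne_zero 2 hs_pos.ne') hbig
  have hX : 0 < 1 + α ^ 2 * Z ^ 2 / (n_r + s) ^ 2 := by positivity
  have hsqrt : Real.sqrt (1 + α ^ 2 * Z ^ 2 / (n_r + s) ^ 2) = m * c ^ 2 / E := by
    rw [show 1 + α ^ 2 * Z ^ 2 / (n_r + s) ^ 2 = (m * c ^ 2 / E) ^ 2 by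
      field_simp; linear_combination key2]
    exact Real.sqrt_sq (by positivity)
  rw [show -(1:ℝ)/2 = -(1/2) by ring, Real.rpow_neg hX.le,
    ← Real.sqrt_eq_rpow, hsqrt]
  field_simp
end

section
/- Let n_r ≥ 0 and n_θ ≥ 1 be integers. Define, for real μ with |μ| < n_θ, N(μ) = √(n_θ² − μ²) and A(μ) = (n_r + N(μ)) · √(μ² + (n_r + N(μ))²). Then, as μ → 0, A(μ) − [(n_r + n_θ)² − μ² (2n_r + n_θ)/(2n_θ) − (μ⁴/8)(2n_r/n_θ³ + 1/(n_r + n_θ)²)] = O(μ⁶). -/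
open Real Filter Asymptotics

/-- Quadratic Taylor expansion of `√(c² + x)` around `x = 0`, with cubic error. -/
lemma sqrt_err_aux (c : ℝ) (hc : 0 < c) :
    (fun x : ℝ => Real.sqrt (c ^ 2 + x) - (c + x / (2 * c) - x ^ 2 / (8 * c ^ 3)))
      =O[nhds 0] fun x : ℝ => x ^ 3 := by
  have hc2 : (0 : ℝ) < c ^ 2 := by positivity
  have hT : Continuous fun x : ℝ => c + x / (2 * c) - x ^ 2 / (8 * c ^ 3) := by fun_prop
  have h1 : ∀ᶠ x : ℝ in nhds 0, 0 < c ^ 2 + x := by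
    have ht : Filter.Tendsto (fun x : ℝ => c ^ 2 + x) (nhds 0) (nhds (c ^ 2)) :=
      (continuous_const.add continuous_id).tendsto' 0 _ (by simp)
    exact ht.eventually (eventually_gt_nhds hc2)
  have h2 : ∀ᶠ x : ℝ in nhds 0, 0 < c + x / (2 * c) - x ^ 2 / (8 * c ^ 3) := by
    have ht : Filter.Tendsto (fun x : ℝ => c + x / (2 * c) - x ^ 2 / (8 * c ^ 3))
        (nhds 0) (nhds c) := hT.tendsto' 0 _ (by norm_num)
    exact ht.eventually (eventually_gt_nhds hc)
  have heq : (fun x : ℝ =>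
      Real.sqrt (c ^ 2 + x) - (c + x / (2 * c) - x ^ 2 / (8 * c ^ 3))) =ᶠ[nhds 0]
        fun x : ℝ => x ^ 3 * ((1 / (8 * c ^ 4) - x / (64 * c ^ 6)) /
          (Real.sqrt (c ^ 2 + x) + (c + x / (2 * c) - x ^ 2 / (8 * c ^ 3)))) := by
    filter_upwards [h1, h2] with x hx1 hx2
    have hs : (0 : ℝ) ≤ Real.sqrt (c ^ 2 + x) := Real.sqrt_nonneg _
    have hd : 0 < Real.sqrt (c ^ 2 + x) + (c + x / (2 * c) - x ^ 2 / (8 * c ^ 3)) := by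
      linarith
    have hs2 : Real.sqrt (c ^ 2 + x) ^ 2 = c ^ 2 + x := Real.sq_sqrt hx1.le
    rw [← mul_div_assoc, eq_div_iff hd.ne']
    have expand : (Real.sqrt (c ^ 2 + x) - (c + x / (2 * c) - x ^ 2 / (8 * c ^ 3))) *
        (Real.sqrt (c ^ 2 + x) + (c + x / (2 * c) - x ^ 2 / (8 * c ^ 3))) =
        Real.sqrt (c ^ 2 + x) ^ 2 - (c + x / (2 * c) - x ^ 2 / (8 * c ^ 3)) ^ 2 := by
      ring
    rw [expand, hs2]
    field_simp
    ring
  have hg : Filter.Tendsto (fun x : ℝ => (1 / (8 * c ^ 4) - x / (64 * c ^ 6)) /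
      (Real.sqrt (c ^ 2 + x) + (c + x / (2 * c) - x ^ 2 / (8 * c ^ 3))))
      (nhds 0) (nhds ((1 / (8 * c ^ 4)) / (c + c))) := by
    apply Filter.Tendsto.div
    · exact (by fun_prop : Continuous fun x : ℝ =>
        1 / (8 * c ^ 4) - x / (64 * c ^ 6)).tendsto' 0 _ (by norm_num)
    · refine (Continuous.tendsto' ?_ 0 _ ?_)
      · exact (Real.continuous_sqrt.comp (by fun_prop)).add hT
      · simp [Real.sqrt_sq hc.le]
    · positivity
  have hO : (fun x : ℝ => x ^ 3 * ((1 / (8 * c ^ 4) - x / (64 * c ^ 6)) /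
      (Real.sqrt (c ^ 2 + x) + (c + x / (2 * c) - x ^ 2 / (8 * c ^ 3)))))
      =O[nhds 0] fun x : ℝ => x ^ 3 := by
    simpa using (isBigO_refl (fun x : ℝ => x ^ 3) (nhds 0)).mul (hg.isBigO_one ℝ)
  exact hO.congr' heq.symm Filter.EventuallyEq.rfl

/-- Power comparison at 0. -/
lemma pow_isBigO_pow_nhds_zero {j k : ℕ} (h : k ≤ j) :
    (fun t : ℝ => t ^ j) =O[nhds 0] fun t : ℝ => t ^ k := by
  rw [Asymptotics.isBigO_iff]
  refine ⟨1, ?_⟩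
  filter_upwards [eventually_abs_sub_lt (0 : ℝ) one_pos] with t ht
  rw [sub_zero] at ht
  simp only [Real.norm_eq_abs, abs_pow, one_mul]
  exact pow_le_pow_of_le_one (abs_nonneg t) ht.le h

noncomputable def auxG (nr c t : ℝ) : ℝ :=
    (1/16)*c⁻¹*(nr + c)⁻¹^3 + (-3/16)*c⁻¹^2*(nr + c)⁻¹^2 + (1/16)*c⁻¹^3*(nr + c)⁻¹ +
    (1/8)*c⁻¹^4 + (3/64)*t^2*c⁻¹^3*(nr + c)⁻¹^3 + (-17/128)*t^2*c⁻¹^4*(nr + c)⁻¹^2 +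
    (3/64)*t^2*c⁻¹^5*(nr + c)⁻¹ + (1/64)*t^2*c⁻¹^6 + (7/256)*t^4*c⁻¹^5*(nr + c)⁻¹^3 +
    (-13/256)*t^4*c⁻¹^6*(nr + c)⁻¹^2 + (3/256)*t^4*c⁻¹^7*(nr + c)⁻¹ +
    (11/1024)*t^6*c⁻¹^7*(nr + c)⁻¹^3 + (-15/1024)*t^6*c⁻¹^8*(nr + c)⁻¹^2 +
    (1/1024)*t^6*c⁻¹^9*(nr + c)⁻¹ + (3/1024)*t^8*c⁻¹^9*(nr + c)⁻¹^3 +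
    (-5/2048)*t^8*c⁻¹^10*(nr + c)⁻¹^2 + (5/8192)*t^10*c⁻¹^11*(nr + c)⁻¹^3 +
    (-5/32768)*t^10*c⁻¹^12*(nr + c)⁻¹^2 + (5/65536)*t^12*c⁻¹^13*(nr + c)⁻¹^3 +
    (1/262144)*t^14*c⁻¹^15*(nr + c)⁻¹^3

noncomputable def auxH (nr c t e : ℝ) : ℝ :=
    (2)*(nr + c) + (1)*e + (-1/2)*e^2*(nr + c)⁻¹ + (-5/8)*e^3*(nr + c)⁻¹^2 +
    (-1/8)*e^4*(nr + c)⁻¹^3 + (-1)*t^2*c⁻¹ + (-3/4)*t^2*e*(nr + c)⁻¹^2 +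
    (3/4)*t^2*e*c⁻¹*(nr + c)⁻¹ + (-1/4)*t^2*e^2*(nr + c)⁻¹^3 + (5/4)*t^2*e^2*c⁻¹*(nr +
    c)⁻¹^2 + (5/16)*t^2*e^3*c⁻¹*(nr + c)⁻¹^3 + (-1/8)*t^4*(nr + c)⁻¹^3 + (3/4)*t^4*c⁻¹*(nr +
    c)⁻¹^2 + (-3/8)*t^4*c⁻¹^2*(nr + c)⁻¹ + (-1/4)*t^4*c⁻¹^3 + (3/8)*t^4*e*c⁻¹*(nr + c)⁻¹^3 +
    (-15/16)*t^4*e*c⁻¹^2*(nr + c)⁻¹^2 + (3/16)*t^4*e*c⁻¹^3*(nr + c)⁻¹ +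
    (-5/16)*t^4*e^2*c⁻¹^2*(nr + c)⁻¹^3 + (5/16)*t^4*e^2*c⁻¹^3*(nr + c)⁻¹^2 +
    (5/64)*t^4*e^3*c⁻¹^3*(nr + c)⁻¹^3 + (-3/16)*t^6*c⁻¹^2*(nr + c)⁻¹^3 +
    (1/2)*t^6*c⁻¹^3*(nr + c)⁻¹^2 + (-3/16)*t^6*c⁻¹^4*(nr + c)⁻¹ + (1/4)*t^6*e*c⁻¹^3*(nr +
    c)⁻¹^3 + (-15/32)*t^6*e*c⁻¹^4*(nr + c)⁻¹^2 + (-5/32)*t^6*e^2*c⁻¹^4*(nr + c)⁻¹^3 +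
    (-17/128)*t^8*c⁻¹^4*(nr + c)⁻¹^3 + (15/64)*t^8*c⁻¹^5*(nr + c)⁻¹^2 +
    (-3/128)*t^8*c⁻¹^6*(nr + c)⁻¹ + (15/128)*t^8*e*c⁻¹^5*(nr + c)⁻¹^3 +
    (-15/256)*t^8*e*c⁻¹^6*(nr + c)⁻¹^2 + (-5/256)*t^8*e^2*c⁻¹^6*(nr + c)⁻¹^3 +
    (-13/256)*t^10*c⁻¹^6*(nr + c)⁻¹^3 + (15/256)*t^10*c⁻¹^7*(nr + c)⁻¹^2 +
    (15/512)*t^10*e*c⁻¹^7*(nr + c)⁻¹^3 + (-15/1024)*t^12*c⁻¹^8*(nr + c)⁻¹^3 +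
    (5/1024)*t^12*c⁻¹^9*(nr + c)⁻¹^2 + (5/2048)*t^12*e*c⁻¹^9*(nr + c)⁻¹^3 +
    (-5/2048)*t^14*c⁻¹^10*(nr + c)⁻¹^3 + (-5/32768)*t^16*c⁻¹^12*(nr + c)⁻¹^3

set_option maxHeartbeats 2000000 in
set_option maxRecDepth 8000 in
lemma semimajor_aux (nr c : ℝ) (hnr : 0 ≤ nr) (hc : 0 < c) :
    (fun t : ℝ =>
        (nr + Real.sqrt (c ^ 2 - t ^ 2)) *
            Real.sqrt (t ^ 2 + (nr + Real.sqrt (c ^ 2 - t ^ 2)) ^ 2) -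
          ((nr + c) ^ 2 - t ^ 2 * (2 * nr + c) / (2 * c) -
            t ^ 4 / 8 * (2 * nr / c ^ 3 + 1 / (nr + c) ^ 2)))
      =O[nhds 0] fun t : ℝ => t ^ 6 := by
  have hm : (0 : ℝ) < nr + c := by linarith
  set u : ℝ → ℝ := fun t => nr + Real.sqrt (c ^ 2 - t ^ 2) with hu_def
  set e1 : ℝ → ℝ := fun t =>
    Real.sqrt (c ^ 2 - t ^ 2) - (c - t ^ 2 / (2 * c) - t ^ 4 / (8 * c ^ 3)) with he1_def
  set X : ℝ → ℝ := fun t => t ^ 2 + u t ^ 2 - (nr + c) ^ 2 with hX_def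
  set e3 : ℝ → ℝ := fun t =>
    Real.sqrt ((nr + c) ^ 2 + X t) -
      ((nr + c) + X t / (2 * (nr + c)) - X t ^ 2 / (8 * (nr + c) ^ 3)) with he3_def
  have hsqrt_cont : Continuous fun t : ℝ => Real.sqrt (c ^ 2 - t ^ 2) :=
    Real.continuous_sqrt.comp (by fun_prop)
  have hu_cont : Continuous u := continuous_const.add hsqrt_cont
  have hu0 : u 0 = nr + c := by simp [hu_def, Real.sqrt_sq hc.le]
  have hX_cont : Continuous X := by
    simp only [hX_def]; fun_prop
  have hX0 : Filter.Tendsto X (nhds 0) (nhds 0) := by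
    refine hX_cont.tendsto' 0 0 ?_
    simp [hX_def, hu0]
  have he1_cont : Continuous e1 := by
    simp only [he1_def]; fun_prop
  -- e1 = O(t^6)
  have he1O : e1 =O[nhds 0] fun t : ℝ => t ^ 6 := by
    have hneg : Filter.Tendsto (fun t : ℝ => -t ^ 2) (nhds 0) (nhds 0) :=
      (by fun_prop : Continuous fun t : ℝ => -t ^ 2).tendsto' 0 0 (by norm_num)
    have h := (sqrt_err_aux c hc).comp_tendsto hneg
    have heq : (fun t : ℝ => Real.sqrt (c ^ 2 + -t ^ 2) -
        (c + -t ^ 2 / (2 * c) - (-t ^ 2) ^ 2 / (8 * c ^ 3))) = e1 := by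
      funext t
      rw [show c ^ 2 + -t ^ 2 = c ^ 2 - t ^ 2 from by ring]
      simp only [he1_def]
      ring
    have h2 : (fun t : ℝ => (-t ^ 2) ^ 3) =O[nhds 0] fun t : ℝ => t ^ 6 := by
      have : (fun t : ℝ => (-t ^ 2) ^ 3) = fun t : ℝ => -t ^ 6 := by funext t; ring
      rw [this]
      simpa using (isBigO_refl (fun t : ℝ => t ^ 6) (nhds 0)).neg_left
    simp only [Function.comp_def] at h
    rw [heq] at h
    exact h.trans h2
  -- u - (nr+c) = O(t^2)
  have humO : (fun t => u t - (nr + c)) =O[nhds 0] fun t : ℝ => t ^ 2 := by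
    have hid : (fun t => u t - (nr + c)) =
        fun t => e1 t + t ^ 2 * (-(1 / (2 * c)) - t ^ 2 / (8 * c ^ 3)) := by
      funext t; simp only [hu_def, he1_def]; field_simp; ring
    rw [hid]
    refine IsBigO.add (he1O.trans (pow_isBigO_pow_nhds_zero (by norm_num))) ?_
    have hb : Filter.Tendsto (fun t : ℝ => -(1 / (2 * c)) - t ^ 2 / (8 * c ^ 3))
        (nhds 0) (nhds (-(1 / (2 * c)) - 0 ^ 2 / (8 * c ^ 3))) :=
      (by fun_prop : Continuous fun t : ℝ => -(1 / (2 * c)) - t ^ 2 / (8 * c ^ 3)).tendsto 0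
    simpa using (isBigO_refl (fun t : ℝ => t ^ 2) (nhds 0)).mul (hb.isBigO_one ℝ)
  -- X = O(t^2)
  have hXO : X =O[nhds 0] fun t : ℝ => t ^ 2 := by
    have hid : X = fun t => t ^ 2 + (u t - (nr + c)) * (u t + (nr + c)) := by
      funext t; simp only [hX_def]; ring
    rw [hid]
    refine IsBigO.add (isBigO_refl _ _) ?_
    have hb : Filter.Tendsto (fun t => u t + (nr + c)) (nhds 0)
        (nhds ((nr + c) + (nr + c))) := (hu_cont.add continuous_const).tendsto' 0 _ (by rw [Pi.add_apply, hu0])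
    simpa using humO.mul (hb.isBigO_one ℝ)
  -- e3 = O(t^6)
  have he3O : e3 =O[nhds 0] fun t : ℝ => t ^ 6 := by
    have h := (sqrt_err_aux (nr + c) hm).comp_tendsto hX0
    have h2 : (fun t => X t ^ 3) =O[nhds 0] fun t : ℝ => t ^ 6 := by
      have := hXO.pow 3
      refine this.trans ?_
      have hid : (fun t : ℝ => (t ^ 2) ^ 3) = fun t : ℝ => t ^ 6 := by funext t; ring
      rw [hid]
      exact isBigO_refl _ _
    simp only [Function.comp_def] at h
    exact h.trans h2
  -- key algebraic identity
  have key : ∀ t : ℝ,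
      u t * Real.sqrt (t ^ 2 + u t ^ 2) -
        ((nr + c) ^ 2 - t ^ 2 * (2 * nr + c) / (2 * c) -
          t ^ 4 / 8 * (2 * nr / c ^ 3 + 1 / (nr + c) ^ 2)) =
      t ^ 6 * auxG nr c t + e1 t * auxH nr c t (e1 t) + u t * e3 t := by
    intro t
    have hic : c * c⁻¹ = 1 := mul_inv_cancel₀ hc.ne'
    have him : (nr + c) * (nr + c)⁻¹ = 1 := mul_inv_cancel₀ hm.ne'
    have h1 : t ^ 2 + u t ^ 2 = (nr + c) ^ 2 + X t := by simp only [hX_def]; ring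
    have hs3 : Real.sqrt (t ^ 2 + u t ^ 2) =
        ((nr + c) + X t / (2 * (nr + c)) - X t ^ 2 / (8 * (nr + c) ^ 3)) + e3 t := by
      rw [h1]; simp only [he3_def]; ring
    have hs : Real.sqrt (c ^ 2 - t ^ 2) =
        (c - t ^ 2 / (2 * c) - t ^ 4 / (8 * c ^ 3)) + e1 t := by
      simp only [he1_def]; ring
    rw [hs3]
    simp only [hX_def, hu_def, auxG, auxH]
    rw [hs]
    simp only [div_eq_mul_inv, mul_inv, ← inv_pow]
    linear_combination
      ((-1/2)*t^2 + (-1/4)*t^4*c⁻¹^2) * hic +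
      ((1)*(e1 t)*(nr + c) + (1)*(e1 t)^2 + (-1/2)*(e1 t)^2*(nr + c)*(nr + c)⁻¹ +
      (-1/2)*(e1 t)^2*(nr + c)^2*(nr + c)⁻¹^2 + (-1)*(e1 t)^3*(nr + c)⁻¹ + (-1)*(e1 t)^3*(nr +
      c)*(nr + c)⁻¹^2 + (-5/8)*(e1 t)^4*(nr + c)⁻¹^2 + (1/2)*t^2 + (-1/2)*t^2*(nr + c)*c⁻¹ +
      (-1/2)*t^2*(e1 t)*(nr + c)⁻¹ + (-1)*t^2*(e1 t)*c⁻¹ + (-1/2)*t^2*(e1 t)*(nr + c)*(nr +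
      c)⁻¹^2 + (1/2)*t^2*(e1 t)*(nr + c)*c⁻¹*(nr + c)⁻¹ + (1/2)*t^2*(e1 t)*(nr +
      c)^2*c⁻¹*(nr + c)⁻¹^2 + (-3/4)*t^2*(e1 t)^2*(nr + c)⁻¹^2 + (3/2)*t^2*(e1 t)^2*c⁻¹*(nr +
      c)⁻¹ + (3/2)*t^2*(e1 t)^2*(nr + c)*c⁻¹*(nr + c)⁻¹^2 + (5/4)*t^2*(e1 t)^3*c⁻¹*(nr +
      c)⁻¹^2 + (-1/8)*t^4*(nr + c)⁻¹^2 + (1/4)*t^4*c⁻¹*(nr + c)⁻¹ + (1/4)*t^4*c⁻¹^2 +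
      (1/4)*t^4*(nr + c)*c⁻¹*(nr + c)⁻¹^2 + (-1/8)*t^4*(nr + c)*c⁻¹^2*(nr + c)⁻¹ +
      (-1/8)*t^4*(nr + c)*c⁻¹^3 + (-1/8)*t^4*(nr + c)^2*c⁻¹^2*(nr + c)⁻¹^2 +
      (3/4)*t^4*(e1 t)*c⁻¹*(nr + c)⁻¹^2 + (-3/4)*t^4*(e1 t)*c⁻¹^2*(nr + c)⁻¹ +
      (-1/4)*t^4*(e1 t)*c⁻¹^3 + (-3/4)*t^4*(e1 t)*(nr + c)*c⁻¹^2*(nr + c)⁻¹^2 +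
      (1/8)*t^4*(e1 t)*(nr + c)*c⁻¹^3*(nr + c)⁻¹ + (1/8)*t^4*(e1 t)*(nr + c)^2*c⁻¹^3*(nr +
      c)⁻¹^2 + (-15/16)*t^4*(e1 t)^2*c⁻¹^2*(nr + c)⁻¹^2 + (3/8)*t^4*(e1 t)^2*c⁻¹^3*(nr +
      c)⁻¹ + (3/8)*t^4*(e1 t)^2*(nr + c)*c⁻¹^3*(nr + c)⁻¹^2 + (5/16)*t^4*(e1 t)^3*c⁻¹^3*(nr +
      c)⁻¹^2 + (-3/16)*t^6*c⁻¹^2*(nr + c)⁻¹^2 + (3/16)*t^6*c⁻¹^3*(nr + c)⁻¹ +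
      (1/8)*t^6*c⁻¹^4 + (3/16)*t^6*(nr + c)*c⁻¹^3*(nr + c)⁻¹^2 + (-1/16)*t^6*(nr +
      c)*c⁻¹^4*(nr + c)⁻¹ + (-1/16)*t^6*(nr + c)^2*c⁻¹^4*(nr + c)⁻¹^2 +
      (1/2)*t^6*(e1 t)*c⁻¹^3*(nr + c)⁻¹^2 + (-3/8)*t^6*(e1 t)*c⁻¹^4*(nr + c)⁻¹ +
      (-3/8)*t^6*(e1 t)*(nr + c)*c⁻¹^4*(nr + c)⁻¹^2 + (-15/32)*t^6*(e1 t)^2*c⁻¹^4*(nr +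
      c)⁻¹^2 + (-17/128)*t^8*c⁻¹^4*(nr + c)⁻¹^2 + (3/32)*t^8*c⁻¹^5*(nr + c)⁻¹ +
      (1/64)*t^8*c⁻¹^6 + (3/32)*t^8*(nr + c)*c⁻¹^5*(nr + c)⁻¹^2 + (-1/128)*t^8*(nr +
      c)*c⁻¹^6*(nr + c)⁻¹ + (-1/128)*t^8*(nr + c)^2*c⁻¹^6*(nr + c)⁻¹^2 +
      (15/64)*t^8*(e1 t)*c⁻¹^5*(nr + c)⁻¹^2 + (-3/64)*t^8*(e1 t)*c⁻¹^6*(nr + c)⁻¹ +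
      (-3/64)*t^8*(e1 t)*(nr + c)*c⁻¹^6*(nr + c)⁻¹^2 + (-15/256)*t^8*(e1 t)^2*c⁻¹^6*(nr +
      c)⁻¹^2 + (-13/256)*t^10*c⁻¹^6*(nr + c)⁻¹^2 + (3/128)*t^10*c⁻¹^7*(nr + c)⁻¹ +
      (3/128)*t^10*(nr + c)*c⁻¹^7*(nr + c)⁻¹^2 + (15/256)*t^10*(e1 t)*c⁻¹^7*(nr + c)⁻¹^2 +
      (-15/1024)*t^12*c⁻¹^8*(nr + c)⁻¹^2 + (1/512)*t^12*c⁻¹^9*(nr + c)⁻¹ + (1/512)*t^12*(nr +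
      c)*c⁻¹^9*(nr + c)⁻¹^2 + (5/1024)*t^12*(e1 t)*c⁻¹^9*(nr + c)⁻¹^2 +
      (-5/2048)*t^14*c⁻¹^10*(nr + c)⁻¹^2 + (-5/32768)*t^16*c⁻¹^12*(nr + c)⁻¹^2) * him
  have hfun : (fun t : ℝ =>
      (nr + Real.sqrt (c ^ 2 - t ^ 2)) *
          Real.sqrt (t ^ 2 + (nr + Real.sqrt (c ^ 2 - t ^ 2)) ^ 2) -
        ((nr + c) ^ 2 - t ^ 2 * (2 * nr + c) / (2 * c) -
          t ^ 4 / 8 * (2 * nr / c ^ 3 + 1 / (nr + c) ^ 2))) =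
      fun t => t ^ 6 * auxG nr c t + e1 t * auxH nr c t (e1 t) + u t * e3 t := by
    funext t
    exact key t
  rw [hfun]
  have hGO : (fun t => t ^ 6 * auxG nr c t) =O[nhds 0] fun t : ℝ => t ^ 6 := by
    have hGc : Continuous (fun t => auxG nr c t) := by unfold auxG; fun_prop
    simpa using (isBigO_refl (fun t : ℝ => t ^ 6) (nhds 0)).mul
      ((hGc.tendsto 0).isBigO_one ℝ)
  have hHO : (fun t => e1 t * auxH nr c t (e1 t)) =O[nhds 0] fun t : ℝ => t ^ 6 := by
    have hHc : Continuous fun t => auxH nr c t (e1 t) := by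
      unfold auxH; fun_prop
    simpa using he1O.mul ((hHc.tendsto 0).isBigO_one ℝ)
  have hUO : (fun t => u t * e3 t) =O[nhds 0] fun t : ℝ => t ^ 6 := by
    simpa using ((hu_cont.tendsto 0).isBigO_one ℝ).mul he3O
  exact (hGO.add hHO).add hUO

/-- Nonrelativistic expansion of the quantized semimajor axis of Sommerfeld's
relativistic Kepler orbits (in units of the Bohr radius): for integers
`n_r ≥ 0`, `n_θ ≥ 1`, with `N(μ) = √(n_θ² - μ²)` and
`A(μ) = (n_r + N(μ))·√(μ² + (n_r + N(μ))²)`, as `μ → 0`,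
`A(μ) = (n_r+n_θ)² - μ²(2n_r+n_θ)/(2n_θ)
        - (μ⁴/8)(2n_r/n_θ³ + 1/(n_r+n_θ)²) + O(μ⁶)`. -/
theorem semimajor_axis_expansion (n_r nθ : ℕ) (hnθ : 1 ≤ nθ)
    (N A : ℝ → ℝ)
    (hN : ∀ μ : ℝ, |μ| < (nθ : ℝ) → N μ = Real.sqrt ((nθ : ℝ) ^ 2 - μ ^ 2))
    (hA : ∀ μ : ℝ, |μ| < (nθ : ℝ) →
      A μ = ((n_r : ℝ) + N μ) * Real.sqrt (μ ^ 2 + ((n_r : ℝ) + N μ) ^ 2)) :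
    (fun μ : ℝ => A μ -
        (((n_r : ℝ) + (nθ : ℝ)) ^ 2
          - μ ^ 2 * (2 * (n_r : ℝ) + (nθ : ℝ)) / (2 * (nθ : ℝ))
          - μ ^ 4 / 8 * (2 * (n_r : ℝ) / (nθ : ℝ) ^ 3
               + 1 / ((n_r : ℝ) + (nθ : ℝ)) ^ 2)))
      =O[nhds 0] fun μ : ℝ => μ ^ 6 := by
  have hc : (0 : ℝ) < (nθ : ℝ) := by exact_mod_cast Nat.pos_of_ne_zero (by omega)
  have haux := semimajor_aux (n_r : ℝ) (nθ : ℝ) (Nat.cast_nonneg _) hc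
  refine haux.congr' ?_ Filter.EventuallyEq.rfl
  filter_upwards [eventually_abs_sub_lt (0 : ℝ) hc] with μ hμ
  rw [sub_zero] at hμ
  rw [hA μ hμ, hN μ hμ]
end
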